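/- Let G be a finite simple graph with vertex set [n] = {1,...,n}, and let {x_e : e ∈ E(G)} be commuting indeterminates. Then in the polynomial ring ℤ[x_e : e ∈ E(G)][t] one has ∑_F (∏_{e∈F} x_e) · t^{n−|F|} = ∏_{k=1}^{n} (t + ∑_{e∈E_k(G)} x_e), where the sum on the left runs over all increasing spanning forests F of G. -/

import Mathlib

open Polynomial Classical

/-- A simple graph on a linearly ordered vertex type is an *increasing forest*
if it is acyclic and, rooting each component at its minimum vertex, labels strictly
increase along every path starting at a root. -/
def IsIncreasingForest {V : Type*} [LinearOrder V] (F : SimpleGraph V) : Prop :=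
  F.IsAcyclic ∧ ∀ (r v : V), (∀ w, F.Reachable r w → r ≤ w) →
    ∀ p : F.Walk r v, p.IsPath → p.support.Chain' (· < ·)

/-- `F` is an increasing spanning forest of `G`. -/
def IsISF {n : ℕ} (G : SimpleGraph (Fin n)) (F : Finset (Sym2 (Fin n))) : Prop :=
  (F : Set (Sym2 (Fin n))) ⊆ G.edgeSet ∧
    IsIncreasingForest (SimpleGraph.fromEdgeSet (F : Set (Sym2 (Fin n))))

/-- The set of edges of `G` whose larger endpoint is `k`. -/
noncomputable def Ek {n : ℕ} (G : SimpleGraph (Fin n)) (k : Fin n) : Finset (Sym2 (Fin n)) :=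
  Finset.univ.filter (fun e => e ∈ G.edgeSet ∧ ∃ j : Fin n, j < k ∧ e = s(j, k))

section Aux

variable {n : ℕ}

lemma mem_Ek_iff {G : SimpleGraph (Fin n)} {e : Sym2 (Fin n)} {k : Fin n} :
    e ∈ Ek G k ↔ e ∈ G.edgeSet ∧ ∃ j : Fin n, j < k ∧ e = s(j, k) := by
  simp [Ek]

lemma Ek_eq_of_mem {G : SimpleGraph (Fin n)} {e : Sym2 (Fin n)} {k k' : Fin n}
    (h : e ∈ Ek G k) (h' : e ∈ Ek G k') : k = k' := by
  rw [mem_Ek_iff] at h h'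
  obtain ⟨-, j, hj, rfl⟩ := h
  obtain ⟨-, j', hj', he⟩ := h'
  rw [Sym2.eq_iff] at he
  rcases he with ⟨rfl, rfl⟩ | ⟨rfl, rfl⟩
  · rfl
  · exact absurd (hj.trans hj') (lt_irrefl _)

/-- The combinatorial characterization of being an ISF. -/
def Good (G : SimpleGraph (Fin n)) (F : Finset (Sym2 (Fin n))) : Prop :=
  (∀ e ∈ F, ∃ k, e ∈ Ek G k) ∧
    ∀ (k : Fin n), ∀ e ∈ F, ∀ e' ∈ F, e ∈ Ek G k → e' ∈ Ek G k → e = e'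

lemma mem_Ek_of_good {G : SimpleGraph (Fin n)} {F : Finset (Sym2 (Fin n))}
    (hG : Good G F) {a v : Fin n} (hav : a < v) (hmem : s(a, v) ∈ F) :
    s(a, v) ∈ Ek G v := by
  obtain ⟨k, hk⟩ := hG.1 _ hmem
  obtain ⟨hedge, j, hj, he⟩ := mem_Ek_iff.mp hk
  rw [Sym2.eq_iff] at he
  rcases he with ⟨rfl, rfl⟩ | ⟨rfl, rfl⟩
  · exact hk
  · exact absurd (hj.trans hav) (lt_irrefl _)

lemma uniq_of_good {G : SimpleGraph (Fin n)} {F : Finset (Sym2 (Fin n))} (hG : Good G F)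
    {v a b : Fin n}
    (ha : (SimpleGraph.fromEdgeSet (F : Set (Sym2 (Fin n)))).Adj a v)
    (hb : (SimpleGraph.fromEdgeSet (F : Set (Sym2 (Fin n)))).Adj b v)
    (hav : a < v) (hbv : b < v) : a = b := by
  rw [SimpleGraph.fromEdgeSet_adj] at ha hb
  have h1 : s(a, v) ∈ Ek G v := mem_Ek_of_good hG hav ha.1
  have h2 : s(b, v) ∈ Ek G v := mem_Ek_of_good hG hbv hb.1
  have := hG.2 v _ ha.1 _ hb.1 h1 h2
  rw [Sym2.eq_iff] at this
  rcases this with ⟨rfl, -⟩ | ⟨rfl, rfl⟩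
  · rfl
  · exact absurd hbv (lt_irrefl _)

/-- In a graph where each vertex has at most one smaller neighbor, any path
whose first step goes up is strictly increasing. -/
lemma chain_of_step {V : Type*} [LinearOrder V] {H : SimpleGraph V}
    (huniq : ∀ {v a b : V}, H.Adj a v → H.Adj b v → a < v → b < v → a = b) :
    ∀ {a b : V} (p : H.Walk a b), p.IsPath → (¬p.Nil → a < p.getVert 1) →
      p.support.Chain' (· < ·) := by
  intro a b p
  induction p with
  | nil => exact fun _ _ => List.isChain_singleton _
  | @cons a c b h q ih =>
    intro hp hstep
    have hac : a < c := by
      have := hstep SimpleGraph.Walk.not_nil_cons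
      simpa using this
    have hq : q.IsPath := hp.of_cons
    cases q with
    | nil => exact List.isChain_pair.mpr hac
    | @cons _ d _ h' q' =>
      have had : a ≠ d := by
        have hnd : a ∉ (SimpleGraph.Walk.cons h' q').support :=
          ((SimpleGraph.Walk.cons_isPath_iff _ _).mp hp).2
        have hdmem : d ∈ (SimpleGraph.Walk.cons h' q').support := by
          rw [SimpleGraph.Walk.support_cons]
          exact List.mem_cons_of_mem _ q'.start_mem_support
        intro hEq
        exact hnd (hEq ▸ hdmem)
      have hcd : c < d := by
        rcases lt_trichotomy c d with h1 | h1 | h1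
        · exact h1
        · exact absurd h1 h'.ne
        · exact absurd (huniq h h'.symm hac h1) had
      have hchain : (SimpleGraph.Walk.cons h' q').support.Chain' (· < ·) := by
        refine ih hq fun _ => ?_
        simpa using hcd
      rw [SimpleGraph.Walk.support_cons]
      rw [SimpleGraph.Walk.support_cons] at hchain ⊢
      exact List.IsChain.cons_cons hac hchain

lemma isAcyclic_of_uniq {V : Type*} [Fintype V] [LinearOrder V] {H : SimpleGraph V}
    (huniq : ∀ {v a b : V}, H.Adj a v → H.Adj b v → a < v → b < v → a = b) :
    H.IsAcyclic := by
  intro v c hc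
  classical
  have hne : c.support.toFinset.Nonempty := by
    simp [List.toFinset_nonempty_iff]
  set m := c.support.toFinset.max' hne with hm
  have hmmem : m ∈ c.support := by
    have := c.support.toFinset.max'_mem hne
    simpa using this
  have hmax : ∀ x ∈ c.support, x ≤ m := fun x hx =>
    c.support.toFinset.le_max' x (by simpa using hx)
  set c' := c.rotate m hmmem with hc'def
  have hc' : c'.IsCycle := hc.rotate hmmem
  obtain ⟨b, hmb, q, hq⟩ := SimpleGraph.Walk.not_nil_iff.mp hc'.not_nil
  rw [hq, SimpleGraph.Walk.cons_isCycle_iff] at hc'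
  -- last edge of q via its reverse
  have hqrnil : ¬q.reverse.Nil := SimpleGraph.Walk.not_nil_of_ne hmb.ne
  obtain ⟨a, hma, q2, hq2⟩ := SimpleGraph.Walk.not_nil_iff.mp hqrnil
  have haq : a ∈ q.support := by
    have : a ∈ q.reverse.support := by
      rw [hq2]; simp
    simpa using this
  have hbq : b ∈ q.support := q.start_mem_support
  have hedge : s(m, a) ∈ q.edges := by
    have : s(m, a) ∈ q.reverse.edges := by
      rw [hq2]; simp
    simpa using this
  have hab : a ≠ b := by
    rintro rfl
    exact hc'.2 hedge
  -- a, b are in the support of c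
  have hsupp : ∀ x ∈ q.support, x ∈ c.support := by
    intro x hx
    have h1 : x ∈ c'.support.tail := by
      rw [hq]; simpa using hx
    have h2 := SimpleGraph.Walk.support_rotate c m hmmem
    have := (h2.mem_iff).mp h1
    exact List.mem_of_mem_tail this
  have ham : a < m := lt_of_le_of_ne (hmax a (hsupp a haq)) (fun h => hma.ne' h)
  have hbm : b < m := lt_of_le_of_ne (hmax b (hsupp b hbq)) (fun h => hmb.ne' h)
  exact hab (huniq hma.symm hmb.symm ham hbm)

lemma lt_getLast_of_mem {V : Type*} [LinearOrder V] {l : List V}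
    (hl : l.Pairwise (· < ·)) {a : V} (ha : a ∈ l) (hne : l ≠ [])
    (h : a ≠ l.getLast hne) : a < l.getLast hne := by
  have hsplit := List.dropLast_append_getLast hne
  have ha' : a ∈ l.dropLast := by
    have := ha
    rw [← hsplit] at this
    rcases List.mem_append.mp this with h1 | h1
    · exact h1
    · simp at h1; exact absurd h1 h
  have hpw : (l.dropLast ++ [l.getLast hne]).Pairwise (· < ·) := hsplit.symm ▸ hl
  exact (List.pairwise_append.mp hpw).2.2 a ha' _ (by simp)

lemma good_of_isISF {G : SimpleGraph (Fin n)} {F : Finset (Sym2 (Fin n))}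
    (h : IsISF G F) : Good G F := by
  obtain ⟨hsub, hacyc, hinc⟩ := h
  set H := SimpleGraph.fromEdgeSet (F : Set (Sym2 (Fin n))) with hH
  constructor
  · intro e he
    have hedge : e ∈ G.edgeSet := hsub he
    induction e using Sym2.inductionOn with
    | hf i j =>
      have hij : G.Adj i j := hedge
      rcases lt_trichotomy i j with h1 | h1 | h1
      · exact ⟨j, mem_Ek_iff.mpr ⟨hedge, i, h1, rfl⟩⟩
      · exact absurd h1 hij.ne
      · exact ⟨i, mem_Ek_iff.mpr ⟨hedge, j, h1, Sym2.eq_swap⟩⟩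
  · intro k e he e' he' hek he'k
    by_contra hne
    obtain ⟨-, j₁, hj₁, rfl⟩ := mem_Ek_iff.mp hek
    obtain ⟨-, j₂, hj₂, rfl⟩ := mem_Ek_iff.mp he'k
    have hj12 : j₁ ≠ j₂ := by
      rintro rfl; exact hne rfl
    have hadj₁ : H.Adj j₁ k := (SimpleGraph.fromEdgeSet_adj _).mpr ⟨he, hj₁.ne⟩
    have hadj₂ : H.Adj j₂ k := (SimpleGraph.fromEdgeSet_adj _).mpr ⟨he', hj₂.ne⟩
    -- the root of the component of k
    have hCne : (Finset.univ.filter (fun v => H.Reachable v k)).Nonempty :=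
      ⟨k, Finset.mem_filter.mpr ⟨Finset.mem_univ _, SimpleGraph.Reachable.refl k⟩⟩
    set r := (Finset.univ.filter (fun v => H.Reachable v k)).min' hCne with hr
    have hrk : H.Reachable r k := by
      have := Finset.min'_mem _ hCne
      simpa using this
    have hroot : ∀ w, H.Reachable r w → r ≤ w := by
      intro w hw
      exact Finset.min'_le _ _ (by simpa using hw.symm.trans hrk)
    -- increasing paths from r to j₁ and j₂
    have key : ∀ j : Fin n, ∀ hadj : H.Adj j k, j < k →
        ∃ p : H.Walk r k, p.IsPath ∧ p.support.getLast (by simp) = k ∧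
          ∃ (p₀ : H.Walk r j), p = p₀.concat hadj ∧ True := by
      intro j hadj hjk
      have hreach : H.Reachable r j := hrk.trans hadj.reachable.symm
      obtain ⟨w⟩ := hreach
      set p₀ := w.toPath with hp₀
      have hchain : (p₀ : H.Walk r j).support.Chain' (· < ·) :=
        hinc r j hroot p₀.1 p₀.2
      have hpw : (p₀ : H.Walk r j).support.Pairwise (· < ·) :=
        List.isChain_iff_pairwise.mp hchain
      have hknot : k ∉ (p₀ : H.Walk r j).support := by
        intro hk
        have hlast : (p₀ : H.Walk r j).support.getLast (by simp) = j :=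
          SimpleGraph.Walk.getLast_support _
        have hkj : k < j := by
          have := lt_getLast_of_mem hpw hk (by simp) (by rw [hlast]; exact hadj.ne')
          rwa [hlast] at this
        exact absurd (hkj.trans hjk) (lt_irrefl _)
      refine ⟨(p₀ : H.Walk r j).concat hadj, ?_, by simp, p₀, rfl, trivial⟩
      rw [SimpleGraph.Walk.isPath_def, SimpleGraph.Walk.support_concat,
        List.nodup_append]
      exact ⟨p₀.2.support_nodup, by simp, fun a ha b hb h => by
        rw [List.mem_singleton] at hb; exact hknot (hb ▸ h ▸ ha)⟩
    obtain ⟨p₁, hp₁, -, w₁, hw₁, -⟩ := key j₁ hadj₁ hj₁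
    obtain ⟨p₂, hp₂, -, w₂, hw₂, -⟩ := key j₂ hadj₂ hj₂
    have := hacyc.path_unique ⟨p₁, hp₁⟩ ⟨p₂, hp₂⟩
    have hpp : p₁ = p₂ := congrArg Subtype.val this
    have hsupp : w₁.support.concat k = w₂.support.concat k := by
      have := congrArg SimpleGraph.Walk.support hpp
      rw [hw₁, hw₂, SimpleGraph.Walk.support_concat, SimpleGraph.Walk.support_concat] at this
      rwa [List.concat_eq_append, List.concat_eq_append]
    have hs : w₁.support = w₂.support := by
      simpa [List.concat_eq_append] using hsupp
    apply hj12
    have h1 : w₁.support.getLast (by simp) = j₁ := SimpleGraph.Walk.getLast_support _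
    have h2 : w₂.support.getLast (by simp) = j₂ := SimpleGraph.Walk.getLast_support _
    rw [← h1, ← h2]
    congr 1

lemma isISF_of_good {G : SimpleGraph (Fin n)} {F : Finset (Sym2 (Fin n))}
    (h : Good G F) : IsISF G F := by
  constructor
  · intro e he
    obtain ⟨k, hk⟩ := h.1 e he
    exact (mem_Ek_iff.mp hk).1
  · constructor
    · exact isAcyclic_of_uniq fun {v a b} ha hb hav hbv => uniq_of_good h ha hb hav hbv
    · intro r v hroot p hp
      refine chain_of_step (fun {v a b} ha hb hav hbv => uniq_of_good h ha hb hav hbv) p hp ?_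
      intro hnil
      have hadj := SimpleGraph.Walk.adj_snd hnil
      exact lt_of_le_of_ne (hroot _ hadj.reachable) hadj.ne

/-! ### The algebraic part -/

/-- From a choice function to a finset of edges. -/
noncomputable def Phi (p : Fin n → Option (Sym2 (Fin n))) : Finset (Sym2 (Fin n)) :=
  Finset.univ.biUnion fun k => (p k).toFinset

lemma mem_Phi {p : Fin n → Option (Sym2 (Fin n))} {e : Sym2 (Fin n)} :
    e ∈ Phi p ↔ ∃ k, p k = some e := by
  simp [Phi, Option.mem_toFinset, Option.mem_def]

lemma Phi_pairwise {G : SimpleGraph (Fin n)} {p : Fin n → Option (Sym2 (Fin n))}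
    (hp : ∀ k e, p k = some e → e ∈ Ek G k) :
    ∀ k ∈ Finset.univ, ∀ k' ∈ Finset.univ, k ≠ k' →
      Disjoint ((p k).toFinset) ((p k').toFinset) := by
  intro k _ k' _ hkk'
  rw [Finset.disjoint_left]
  intro e he he'
  rw [Option.mem_toFinset, Option.mem_def] at he he'
  exact hkk' (Ek_eq_of_mem (hp k e he) (hp k' e he'))

lemma Phi_card {G : SimpleGraph (Fin n)} {p : Fin n → Option (Sym2 (Fin n))}
    (hp : ∀ k e, p k = some e → e ∈ Ek G k) :
    (Phi p).card = (Finset.univ.filter fun k => (p k).isSome).card := by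
  rw [Phi, Finset.card_biUnion (Phi_pairwise hp), Finset.card_filter]
  refine Finset.sum_congr rfl fun k _ => ?_
  cases h : p k <;> simp [h]

lemma weight_eq {G : SimpleGraph (Fin n)} {p : Fin n → Option (Sym2 (Fin n))}
    (hp : ∀ k e, p k = some e → e ∈ Ek G k) :
    (C (∏ e ∈ Phi p, MvPolynomial.X e) *
        (X : Polynomial (MvPolynomial (Sym2 (Fin n)) ℤ)) ^ (n - (Phi p).card))
      = ∏ k : Fin n, (p k).elim (X : Polynomial (MvPolynomial (Sym2 (Fin n)) ℤ))
          (fun e => C (MvPolynomial.X e)) := by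
  classical
  have step : ∀ k : Fin n, (p k).elim (X : Polynomial (MvPolynomial (Sym2 (Fin n)) ℤ))
      (fun e => C (MvPolynomial.X e))
      = C ((p k).elim 1 MvPolynomial.X) *
          (if (p k).isSome then 1 else (X : Polynomial (MvPolynomial (Sym2 (Fin n)) ℤ))) := by
    intro k
    cases h : p k <;> simp [h]
  rw [Finset.prod_congr rfl fun k _ => step k, Finset.prod_mul_distrib, ← map_prod]
  have h1 : (∏ k : Fin n, (p k).elim (1 : MvPolynomial (Sym2 (Fin n)) ℤ) MvPolynomial.X)
      = ∏ e ∈ Phi p, MvPolynomial.X e := by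
    rw [Phi, Finset.prod_biUnion (Phi_pairwise hp)]
    refine Finset.prod_congr rfl fun k _ => ?_
    cases h : p k <;> simp [h]
  have h2 : (∏ k : Fin n, (if (p k).isSome then 1
        else (X : Polynomial (MvPolynomial (Sym2 (Fin n)) ℤ))))
      = (X : Polynomial (MvPolynomial (Sym2 (Fin n)) ℤ)) ^ (n - (Phi p).card) := by
    rw [Finset.prod_ite, Finset.prod_const, Finset.prod_const, one_pow, one_mul]
    congr 1
    have hadd := Finset.card_filter_add_card_filter_not
      (s := (Finset.univ : Finset (Fin n))) (p := fun k => (p k).isSome)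
    rw [Phi_card hp]
    simp only [Finset.card_univ, Fintype.card_fin] at hadd
    omega
  rw [h1, h2]

theorem stmt_2 {n : ℕ} (G : SimpleGraph (Fin n)) :
    ∑ F ∈ (Finset.univ : Finset (Finset (Sym2 (Fin n)))).filter (fun F => IsISF G F),
        (C (∏ e ∈ F, MvPolynomial.X e) *
          (X : Polynomial (MvPolynomial (Sym2 (Fin n)) ℤ)) ^ (n - F.card))
      = ∏ k : Fin n, ((X : Polynomial (MvPolynomial (Sym2 (Fin n)) ℤ)) +
          C (∑ e ∈ Ek G k, MvPolynomial.X e)) := by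
  classical
  set O : Fin n → Finset (Option (Sym2 (Fin n))) :=
    fun k => insert none ((Ek G k).image some) with hO
  have hfact : ∀ k : Fin n, ((X : Polynomial (MvPolynomial (Sym2 (Fin n)) ℤ)) +
      C (∑ e ∈ Ek G k, MvPolynomial.X e))
      = ∑ o ∈ O k, o.elim (X : Polynomial (MvPolynomial (Sym2 (Fin n)) ℤ))
          (fun e => C (MvPolynomial.X e)) := by
    intro k
    rw [hO, Finset.sum_insert (by simp),
      Finset.sum_image (fun a _ b _ h => Option.some_injective _ h)]
    simp [map_sum]
  rw [Finset.prod_congr rfl fun k _ => hfact k, Finset.prod_univ_sum]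
  -- membership facts
  have hmem : ∀ p ∈ Fintype.piFinset O, ∀ k e, p k = some e → e ∈ Ek G k := by
    intro p hp k e he
    have := (Fintype.mem_piFinset.mp hp) k
    rw [hO] at this
    simp only [Finset.mem_insert, Finset.mem_image] at this
    rcases this with h1 | ⟨e', he', h1⟩
    · rw [he] at h1; exact absurd h1 (by simp)
    · rw [he] at h1
      obtain rfl : e' = e := Option.some_injective _ h1
      exact he'
  symm
  refine Finset.sum_bij (fun p _ => Phi p) ?_ ?_ ?_ ?_
  · -- maps to ISFs
    intro p hp
    rw [Finset.mem_filter]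
    refine ⟨Finset.mem_univ _, isISF_of_good ⟨?_, ?_⟩⟩
    · intro e he
      obtain ⟨k, hk⟩ := mem_Phi.mp he
      exact ⟨k, hmem p hp k e hk⟩
    · intro k e he e' he' hek he'k
      obtain ⟨k₁, hk₁⟩ := mem_Phi.mp he
      obtain ⟨k₂, hk₂⟩ := mem_Phi.mp he'
      have h1 : k₁ = k := Ek_eq_of_mem (hmem p hp k₁ e hk₁) hek
      have h2 : k₂ = k := Ek_eq_of_mem (hmem p hp k₂ e' hk₂) he'k
      subst h1; subst h2
      rw [hk₁] at hk₂
      exact Option.some_injective _ hk₂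
  · -- injective
    intro p₁ hp₁ p₂ hp₂ hphi0
    have hphi : Phi p₁ = Phi p₂ := hphi0
    funext k
    cases h1 : p₁ k with
    | some e =>
      have he : e ∈ Phi p₂ := by rw [← hphi]; exact mem_Phi.mpr ⟨k, h1⟩
      obtain ⟨k', hk'⟩ := mem_Phi.mp he
      have : k' = k := Ek_eq_of_mem (hmem p₂ hp₂ k' e hk') (hmem p₁ hp₁ k e h1)
      rw [← this, hk']
    | none =>
      cases h2 : p₂ k with
      | some e =>
        have he : e ∈ Phi p₁ := by rw [hphi]; exact mem_Phi.mpr ⟨k, h2⟩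
        obtain ⟨k', hk'⟩ := mem_Phi.mp he
        have : k' = k := Ek_eq_of_mem (hmem p₁ hp₁ k' e hk') (hmem p₂ hp₂ k e h2)
        rw [this, h1] at hk'
        exact hk'
      | none => rfl
  · -- surjective
    intro F hF
    rw [Finset.mem_filter] at hF
    have hgood : Good G F := good_of_isISF hF.2
    set p : Fin n → Option (Sym2 (Fin n)) :=
      fun k => if h : ∃ e, e ∈ F ∧ e ∈ Ek G k then some h.choose else none with hpdef
    have hpk : ∀ k e, p k = some e → e ∈ F ∧ e ∈ Ek G k := by
      intro k e he
      rw [hpdef] at he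
      dsimp only at he
      split at he
      · next h =>
        obtain rfl : h.choose = e := Option.some_injective _ he
        exact h.choose_spec
      · exact absurd he (by simp)
    refine ⟨p, ?_, ?_⟩
    · rw [Fintype.mem_piFinset]
      intro k
      rw [hO, hpdef]
      dsimp only
      split
      · next h => exact Finset.mem_insert_of_mem (Finset.mem_image_of_mem _ h.choose_spec.2)
      · exact Finset.mem_insert_self _ _
    · ext e
      rw [mem_Phi]
      constructor
      · rintro ⟨k, hk⟩
        exact (hpk k e hk).1
      · intro he
        obtain ⟨k, hk⟩ := hgood.1 e he
        have hex : ∃ e', e' ∈ F ∧ e' ∈ Ek G k := ⟨e, he, hk⟩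
        refine ⟨k, ?_⟩
        rw [hpdef]
        dsimp only
        rw [dif_pos hex]
        congr 1
        exact hgood.2 k _ hex.choose_spec.1 _ he hex.choose_spec.2 hk
  · -- weights agree
    intro p hp
    exact (weight_eq (hmem p hp)).symm
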